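/- Let λ ∈ {1,−1}, N ≥ 1 and u ∈ ℍ_N. For every t ≥ 0, ‖S^N(t)(u + iλt|u|²u) − u‖ ≤ √(2t) · (Σ_{k=1}^N k²π² |∫₀¹ u e_k dx|²)^{1/2} + t‖u‖³_{L⁶(0,1)}. -/

import Mathlib

open MeasureTheory Complex Real Set
open scoped ENNReal

noncomputable section

/-- Lebesgue measure restricted to the interval `(0,1)`. -/
def μ01 : Measure ℝ := volume.restrict (Ioo (0:ℝ) 1)

/-- The `L^p((0,1);ℂ)` norm. -/
def lpnorm (p : ℝ≥0∞) (u : ℝ → ℂ) : ℝ := (eLpNorm u p μ01).toReal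

/-- The pointwise cubic nonlinearity `|u|²u`. -/
def cubic (u : ℝ → ℂ) : ℝ → ℂ := fun x => ((‖u x‖ ^ 2 : ℝ) : ℂ) * u x

/-- The Dirichlet sine eigenfunctions `e_k(x) = √2 sin(kπx)`, as elements of `L²((0,1);ℂ)`. -/
def eFun (k : ℕ) : ℝ → ℂ := fun x => ((Real.sqrt 2 * Real.sin (k * Real.pi * x) : ℝ) : ℂ)

/-- The `k`-th Fourier sine coefficient `∫₀¹ u e_k`. -/
def coeff (k : ℕ) (u : ℝ → ℂ) : ℂ := ∫ x in Ioo (0:ℝ) 1, u x * eFun k x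

/-- The spectral Galerkin projection `P^N`. -/
def PN (N : ℕ) (u : ℝ → ℂ) : ℝ → ℂ :=
  fun x => ∑ k ∈ Finset.Icc 1 N, coeff k u * eFun k x

/-- The truncated Schrödinger group `S^N(t) = P^N e^{itΔ}`. -/
def SN (N : ℕ) (t : ℝ) (u : ℝ → ℂ) : ℝ → ℂ :=
  fun x => ∑ k ∈ Finset.Icc 1 N,
    Complex.exp (-Complex.I * (((k:ℝ)^2 * Real.pi^2 * t : ℝ) : ℂ)) * coeff k u * eFun k x

/-- The space `ℍ_N`: the complex span of `e_1, …, e_N`. -/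
def HN (N : ℕ) : Set (ℝ → ℂ) :=
  {u | ∃ c : ℕ → ℂ, u = fun x => ∑ k ∈ Finset.Icc 1 N, c k * eFun k x}

/-- The discrete Dirichlet Laplacian on `ℍ_N`, determined by `Δ_N e_k = −k²π² e_k`. -/
def DeltaN (N : ℕ) (u : ℝ → ℂ) : ℝ → ℂ :=
  fun x => ∑ k ∈ Finset.Icc 1 N, (-(((k:ℝ)^2 * Real.pi^2 : ℝ) : ℂ)) * coeff k u * eFun k x

/-- The squared `ℍ¹` norm `‖u‖² + ‖u′‖²`. -/
def h1normSq (u : ℝ → ℂ) : ℝ := (lpnorm 2 u)^2 + (lpnorm 2 (deriv u))^2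

/-- The Hamiltonian `ℋ(u) = ½‖u′‖² − (λ/4)‖u‖⁴_{L⁴}`. -/
def Ham (l : ℝ) (u : ℝ → ℂ) : ℝ :=
  (1/2) * (lpnorm 2 (deriv u))^2 - (l/4) * (lpnorm 4 u)^4

/-- The functional `f(u) = ‖u″‖² + λ Re ∫₀¹ u″ conj(|u|²u)`. -/
def fFun (l : ℝ) (u : ℝ → ℂ) : ℝ :=
  (lpnorm 2 (deriv (deriv u)))^2
    + l * (∫ x in Ioo (0:ℝ) 1, deriv (deriv u) x * (starRingEnd ℂ) (cubic u x)).re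

lemma contE (k : ℕ) : Continuous (eFun k) := by
  unfold eFun; continuity

lemma integrableOn_of_cont {f : ℝ → ℂ} (hf : Continuous f) :
    IntegrableOn f (Ioo (0:ℝ) 1) volume :=
  (hf.integrableOn_Icc (a:=0) (b:=1)).mono_set Ioo_subset_Icc_self

lemma memLp_of_cont {f : ℝ → ℂ} (hf : Continuous f) (p : ℝ≥0∞) : MemLp f p μ01 := by
  have : IsFiniteMeasure μ01 := by
    constructor
    rw [μ01, Measure.restrict_apply_univ]
    simp [Real.volume_Ioo]
  refine MemLp.of_bound hf.aestronglyMeasurable (sSup (norm ∘ f '' Icc 0 1)) ?_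
  have hb : ∀ x ∈ Icc (0:ℝ) 1, ‖f x‖ ≤ sSup (norm ∘ f '' Icc 0 1) := by
    intro x hx
    exact le_csSup ((isCompact_Icc.image (by continuity)).bddAbove) ⟨x, hx, rfl⟩
  rw [μ01]
  rw [ae_restrict_iff' measurableSet_Ioo]
  exact ae_of_all _ fun x hx => hb x (Ioo_subset_Icc_self hx)

lemma intCos (m : ℤ) (hm : m ≠ 0) : ∫ x in (0:ℝ)..1, Real.cos ((m:ℝ) * Real.pi * x) = 0 := by
  have hc : (m:ℝ) * Real.pi ≠ 0 := mul_ne_zero (Int.cast_ne_zero.2 hm) Real.pi_ne_zero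
  rw [intervalIntegral.integral_comp_mul_left (fun y => Real.cos y) hc]
  simp [integral_cos, Real.sin_int_mul_pi]

lemma orthoSin (j k : ℕ) (hj : 1 ≤ j) (hk : 1 ≤ k) :
    ∫ x in (0:ℝ)..1, (Real.sqrt 2 * Real.sin (j*Real.pi*x)) * (Real.sqrt 2 * Real.sin (k*Real.pi*x))
      = if j = k then 1 else 0 := by
  have h2 : Real.sqrt 2 * Real.sqrt 2 = 2 := Real.mul_self_sqrt (by norm_num)
  have key : ∀ x : ℝ, (Real.sqrt 2 * Real.sin (j*Real.pi*x)) * (Real.sqrt 2 * Real.sin (k*Real.pi*x))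
      = Real.cos ((((j:ℤ) - k : ℤ):ℝ)*Real.pi*x) - Real.cos ((((j:ℤ) + k : ℤ):ℝ)*Real.pi*x) := by
    intro x
    push_cast
    rw [show ((j:ℝ) - k)*Real.pi*x = j*Real.pi*x - k*Real.pi*x by ring,
        show ((j:ℝ) + k)*Real.pi*x = j*Real.pi*x + k*Real.pi*x by ring,
        Real.cos_sub, Real.cos_add]
    linear_combination (Real.sin (j*Real.pi*x) * Real.sin (k*Real.pi*x)) * h2
  rw [intervalIntegral.integral_congr (fun x _ => key x)]
  have hint : ∀ m : ℤ, IntervalIntegrable (fun x => Real.cos ((m:ℝ)*Real.pi*x)) volume 0 1 :=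
    fun m => (by continuity : Continuous fun x : ℝ => Real.cos ((m:ℝ)*Real.pi*x)).intervalIntegrable 0 1
  rw [intervalIntegral.integral_sub (hint _) (hint _)]
  by_cases h : j = k
  · subst h
    rw [show ((j:ℤ) - j : ℤ) = 0 from by ring, intCos ((j:ℤ)+j) (by omega)]
    norm_num
  · rw [intCos ((j:ℤ)-k) (by omega), intCos ((j:ℤ)+k) (by omega)]
    simp [h]

lemma ortho (j k : ℕ) (hj : 1 ≤ j) (hk : 1 ≤ k) :
    ∫ x in Ioo (0:ℝ) 1, eFun j x * eFun k x = ((if j = k then 1 else 0 : ℝ) : ℂ) := by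
  have h1 : ∀ x : ℝ, eFun j x * eFun k x
      = (((Real.sqrt 2 * Real.sin (j*Real.pi*x)) * (Real.sqrt 2 * Real.sin (k*Real.pi*x)) : ℝ) : ℂ) := by
    intro x; simp [eFun]
  simp only [h1]
  have h2 : ∫ x in Ioo (0:ℝ) 1,
      (Real.sqrt 2 * Real.sin (j*Real.pi*x)) * (Real.sqrt 2 * Real.sin (k*Real.pi*x))
      = if j = k then 1 else 0 := by
    rw [← MeasureTheory.integral_Ioc_eq_integral_Ioo,
        ← intervalIntegral.integral_of_le (by norm_num : (0:ℝ) ≤ 1)]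
    exact orthoSin j k hj hk
  rw [← h2]
  exact integral_ofReal

lemma lpnorm_sq_int {f : ℝ → ℂ} (hf : Continuous f) (p : ℝ) (hp : 0 < p) :
    lpnorm (ENNReal.ofReal p) f = (∫ x in Ioo (0:ℝ) 1, ‖f x‖^p) ^ p⁻¹ := by
  rw [lpnorm, (memLp_of_cont hf _).eLpNorm_eq_integral_rpow_norm
      (by simpa using hp) ENNReal.ofReal_ne_top]
  rw [ENNReal.toReal_ofReal (by positivity), ENNReal.toReal_ofReal hp.le, μ01]

lemma lpnorm_two_eq {f : ℝ → ℂ} (hf : Continuous f) :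
    lpnorm 2 f = Real.sqrt (∫ x in Ioo (0:ℝ) 1, ‖f x‖^2) := by
  have := lpnorm_sq_int hf 2 (by norm_num)
  rw [show ENNReal.ofReal (2:ℝ) = 2 by norm_num] at this
  rw [this, Real.sqrt_eq_rpow]
  norm_num

lemma conj_eFun (k : ℕ) (x : ℝ) : (starRingEnd ℂ) (eFun k x) = eFun k x := Complex.conj_ofReal _

lemma expand (N : ℕ) (a b : ℕ → ℂ) :
    ∫ x in Ioo (0:ℝ) 1, (∑ j ∈ Finset.Icc 1 N, a j * eFun j x)
        * (starRingEnd ℂ) (∑ k ∈ Finset.Icc 1 N, b k * eFun k x)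
    = ∑ j ∈ Finset.Icc 1 N, a j * (starRingEnd ℂ) (b j) := by
  have hpt : ∀ x : ℝ, (∑ j ∈ Finset.Icc 1 N, a j * eFun j x)
        * (starRingEnd ℂ) (∑ k ∈ Finset.Icc 1 N, b k * eFun k x)
      = ∑ j ∈ Finset.Icc 1 N, ∑ k ∈ Finset.Icc 1 N,
          (a j * (starRingEnd ℂ) (b k)) * (eFun j x * eFun k x) := by
    intro x
    rw [map_sum, Finset.sum_mul_sum]
    refine Finset.sum_congr rfl fun j _ => Finset.sum_congr rfl fun k _ => ?_
    rw [map_mul, conj_eFun]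
    ring
  simp only [hpt]
  rw [MeasureTheory.integral_finset_sum _ (fun j _ => ?_)]
  · have : ∀ j ∈ Finset.Icc 1 N, ∫ x in Ioo (0:ℝ) 1, ∑ k ∈ Finset.Icc 1 N,
        (a j * (starRingEnd ℂ) (b k)) * (eFun j x * eFun k x)
        = a j * (starRingEnd ℂ) (b j) := by
      intro j hj
      rw [MeasureTheory.integral_finset_sum _ (fun k _ => ?_)]
      · have : ∀ k ∈ Finset.Icc 1 N, ∫ x in Ioo (0:ℝ) 1,
            (a j * (starRingEnd ℂ) (b k)) * (eFun j x * eFun k x)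
            = if j = k then a j * (starRingEnd ℂ) (b j) else 0 := by
          intro k hk
          rw [MeasureTheory.integral_const_mul,
            ortho j k (Finset.mem_Icc.mp hj).1 (Finset.mem_Icc.mp hk).1]
          by_cases h : j = k <;> simp [h]
        rw [Finset.sum_congr rfl this, Finset.sum_ite_eq (Finset.Icc 1 N) j
          (fun _ => a j * (starRingEnd ℂ) (b j))]
        simp [hj]
      · exact MeasureTheory.Integrable.const_mul
          (integrableOn_of_cont ((contE j).mul (contE k))) _
    rw [Finset.sum_congr rfl this]
  · refine MeasureTheory.integrable_finset_sum _ (fun k _ => ?_)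
    exact MeasureTheory.Integrable.const_mul
      (integrableOn_of_cont ((contE j).mul (contE k))) _

lemma int_norm_sq_eq {w : ℝ → ℂ} (hw : Continuous w) :
    ∫ x in Ioo (0:ℝ) 1, ‖w x‖^2
      = (∫ x in Ioo (0:ℝ) 1, w x * (starRingEnd ℂ) (w x)).re := by
  have h := integral_re (μ := volume.restrict (Ioo (0:ℝ) 1))
    (f := fun x => w x * (starRingEnd ℂ) (w x))
    (integrableOn_of_cont (hw.mul (Complex.continuous_conj.comp hw)))
  simp only [RCLike.re_to_complex] at h
  rw [← h]
  refine MeasureTheory.setIntegral_congr_fun measurableSet_Ioo (fun x _ => ?_)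
  rw [Complex.mul_conj, Complex.normSq_eq_norm_sq]
  norm_cast

lemma parseval (N : ℕ) (a : ℕ → ℂ) :
    ∫ x in Ioo (0:ℝ) 1, ‖∑ k ∈ Finset.Icc 1 N, a k * eFun k x‖^2
      = ∑ k ∈ Finset.Icc 1 N, ‖a k‖^2 := by
  have hc : Continuous (fun x => ∑ k ∈ Finset.Icc 1 N, a k * eFun k x) := by
    exact continuous_finset_sum _ (fun k _ => (continuous_const.mul (contE k)))
  rw [int_norm_sq_eq hc, expand N a a]
  rw [Complex.re_sum]
  refine Finset.sum_congr rfl fun k _ => ?_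
  rw [Complex.mul_conj, Complex.normSq_eq_norm_sq]
  norm_cast

lemma bessel (N : ℕ) {v : ℝ → ℂ} (hv : Continuous v) :
    ∑ k ∈ Finset.Icc 1 N, ‖coeff k v‖^2 ≤ ∫ x in Ioo (0:ℝ) 1, ‖v x‖^2 := by
  set g : ℝ → ℂ := fun x => ∑ k ∈ Finset.Icc 1 N, coeff k v * eFun k x with hg
  have hgc : Continuous g := continuous_finset_sum _ fun k _ => continuous_const.mul (contE k)
  set S : ℂ := ∑ k ∈ Finset.Icc 1 N, coeff k v * (starRingEnd ℂ) (coeff k v) with hS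
  have hvg : ∫ x in Ioo (0:ℝ) 1, v x * (starRingEnd ℂ) (g x) = S := by
    have hpt : ∀ x, v x * (starRingEnd ℂ) (g x)
        = ∑ k ∈ Finset.Icc 1 N, (starRingEnd ℂ) (coeff k v) * (v x * eFun k x) := by
      intro x
      rw [hg]
      simp only [map_sum, map_mul, conj_eFun, Finset.mul_sum]
      exact Finset.sum_congr rfl fun k _ => by ring
    simp only [hpt]
    rw [MeasureTheory.integral_finset_sum _
      (fun k _ => (integrableOn_of_cont (f := fun x => v x * eFun k x) (hv.mul (contE k))).const_mul _)]
    exact Finset.sum_congr rfl fun k _ => by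
      rw [MeasureTheory.integral_const_mul]; rw [coeff]; ring
  have hgv : ∫ x in Ioo (0:ℝ) 1, g x * (starRingEnd ℂ) (v x) = S := by
    have hpt : ∀ x, g x * (starRingEnd ℂ) (v x)
        = (starRingEnd ℂ) (v x * (starRingEnd ℂ) (g x)) := by
      intro x; rw [map_mul, RingHomInvPair.comp_apply_eq]; ring
    simp only [hpt]
    rw [integral_conj, hvg, hS, map_sum]
    exact Finset.sum_congr rfl fun k _ => by
      rw [map_mul, RingHomInvPair.comp_apply_eq]; ring
  have hgg : ∫ x in Ioo (0:ℝ) 1, g x * (starRingEnd ℂ) (g x) = S := expand N _ _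
  have hSre : S.re = ∑ k ∈ Finset.Icc 1 N, ‖coeff k v‖^2 := by
    rw [hS, Complex.re_sum]
    refine Finset.sum_congr rfl fun k _ => ?_
    rw [Complex.mul_conj, Complex.normSq_eq_norm_sq]; norm_cast
  have hnn : 0 ≤ ∫ x in Ioo (0:ℝ) 1, ‖v x - g x‖^2 :=
    MeasureTheory.setIntegral_nonneg measurableSet_Ioo (fun x _ => by positivity)
  have Iv : IntegrableOn (fun x => v x * (starRingEnd ℂ) (v x)) (Ioo (0:ℝ) 1) volume :=
    integrableOn_of_cont (hv.mul (Complex.continuous_conj.comp hv))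
  have Ivg : IntegrableOn (fun x => v x * (starRingEnd ℂ) (g x)) (Ioo (0:ℝ) 1) volume :=
    integrableOn_of_cont (hv.mul (Complex.continuous_conj.comp hgc))
  have Igv : IntegrableOn (fun x => g x * (starRingEnd ℂ) (v x)) (Ioo (0:ℝ) 1) volume :=
    integrableOn_of_cont (hgc.mul (Complex.continuous_conj.comp hv))
  have Igg : IntegrableOn (fun x => g x * (starRingEnd ℂ) (g x)) (Ioo (0:ℝ) 1) volume :=
    integrableOn_of_cont (hgc.mul (Complex.continuous_conj.comp hgc))
  have expand4 : ∫ x in Ioo (0:ℝ) 1, (v x - g x) * (starRingEnd ℂ) (v x - g x)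
      = (∫ x in Ioo (0:ℝ) 1, v x * (starRingEnd ℂ) (v x)) - S := by
    have hpt : ∀ x, (v x - g x) * (starRingEnd ℂ) (v x - g x)
        = v x * (starRingEnd ℂ) (v x) - v x * (starRingEnd ℂ) (g x)
          - g x * (starRingEnd ℂ) (v x) + g x * (starRingEnd ℂ) (g x) := by
      intro x; rw [map_sub]; ring
    simp only [hpt]
    have A1 : (∫ x in Ioo (0:ℝ) 1, (v x * (starRingEnd ℂ) (v x) - v x * (starRingEnd ℂ) (g x)
          - g x * (starRingEnd ℂ) (v x) + g x * (starRingEnd ℂ) (g x)))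
        = (∫ x in Ioo (0:ℝ) 1, (v x * (starRingEnd ℂ) (v x) - v x * (starRingEnd ℂ) (g x)
          - g x * (starRingEnd ℂ) (v x))) + ∫ x in Ioo (0:ℝ) 1, g x * (starRingEnd ℂ) (g x) :=
      MeasureTheory.integral_add ((Iv.sub Ivg).sub Igv) Igg
    have A2 : (∫ x in Ioo (0:ℝ) 1, (v x * (starRingEnd ℂ) (v x) - v x * (starRingEnd ℂ) (g x)
          - g x * (starRingEnd ℂ) (v x)))
        = (∫ x in Ioo (0:ℝ) 1, (v x * (starRingEnd ℂ) (v x) - v x * (starRingEnd ℂ) (g x)))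
          - ∫ x in Ioo (0:ℝ) 1, g x * (starRingEnd ℂ) (v x) :=
      MeasureTheory.integral_sub (Iv.sub Ivg) Igv
    have A3 : (∫ x in Ioo (0:ℝ) 1, (v x * (starRingEnd ℂ) (v x) - v x * (starRingEnd ℂ) (g x)))
        = (∫ x in Ioo (0:ℝ) 1, v x * (starRingEnd ℂ) (v x))
          - ∫ x in Ioo (0:ℝ) 1, v x * (starRingEnd ℂ) (g x) :=
      MeasureTheory.integral_sub Iv Ivg
    rw [A1, A2, A3, hvg, hgv, hgg]
    ring
  have hdiff : ∫ x in Ioo (0:ℝ) 1, ‖v x - g x‖^2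
      = (∫ x in Ioo (0:ℝ) 1, ‖v x‖^2) - ∑ k ∈ Finset.Icc 1 N, ‖coeff k v‖^2 := by
    rw [int_norm_sq_eq (w := fun x => v x - g x) (hv.sub hgc), int_norm_sq_eq hv, ← hSre]
    rw [show (fun x => (v x - g x) * (starRingEnd ℂ) (v x - g x))
        = fun x => (v x - g x) * (starRingEnd ℂ) ((fun y => v y - g y) x) from rfl] at expand4
    rw [expand4, Complex.sub_re]
  linarith

lemma one_sub_cos_le (θ : ℝ) (hθ : 0 ≤ θ) : 1 - Real.cos θ ≤ θ := by
  rcases le_total θ 2 with h | h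
  · nlinarith [Real.one_sub_sq_div_two_le_cos (x := θ)]
  · nlinarith [Real.neg_one_le_cos θ]

lemma expBound (θ : ℝ) (hθ : 0 ≤ θ) :
    ‖Complex.exp (-Complex.I * (θ:ℂ)) - 1‖^2 ≤ 2*θ := by
  have h0 : (-Complex.I * (θ:ℂ)) = ((-θ:ℝ):ℂ) * Complex.I := by push_cast; ring
  have h1 : Complex.exp (-Complex.I * (θ:ℂ)) - 1
      = ((Real.cos θ - 1 : ℝ):ℂ) + ((-Real.sin θ : ℝ):ℂ) * Complex.I := by
    rw [h0, Complex.exp_mul_I, ← Complex.ofReal_cos, ← Complex.ofReal_sin,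
        Real.cos_neg, Real.sin_neg]
    push_cast
    ring
  rw [h1, Complex.sq_norm, Complex.normSq_add_mul_I]
  nlinarith [one_sub_cos_le θ hθ, Real.sin_sq_add_cos_sq θ]

lemma abs_E (θ : ℝ) : ‖Complex.exp (-Complex.I * (θ:ℂ))‖ = 1 := by
  rw [Complex.norm_exp]
  simp

lemma coeff_sum (N : ℕ) (a : ℕ → ℂ) (k : ℕ) (hk : k ∈ Finset.Icc 1 N) :
    coeff k (fun x => ∑ j ∈ Finset.Icc 1 N, a j * eFun j x) = a k := by
  rw [coeff]
  have hpt : ∀ x : ℝ, (∑ j ∈ Finset.Icc 1 N, a j * eFun j x) * eFun k x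
      = ∑ j ∈ Finset.Icc 1 N, a j * (eFun j x * eFun k x) := by
    intro x; rw [Finset.sum_mul]; exact Finset.sum_congr rfl fun j _ => by ring
  simp only [hpt]
  rw [MeasureTheory.integral_finset_sum _
    (fun j _ => (integrableOn_of_cont (f := fun x => eFun j x * eFun k x) ((contE j).mul (contE k))).const_mul _)]
  have : ∀ j ∈ Finset.Icc 1 N, ∫ x in Ioo (0:ℝ) 1, a j * (eFun j x * eFun k x)
      = if j = k then a j else 0 := by
    intro j hj
    rw [MeasureTheory.integral_const_mul, ortho j k (Finset.mem_Icc.mp hj).1 (Finset.mem_Icc.mp hk).1]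
    by_cases h : j = k <;> simp [h]
  rw [Finset.sum_congr rfl this, Finset.sum_ite_eq' (Finset.Icc 1 N) k (fun j => a j)]
  simp [hk]

lemma lpnorm_six_cubed {u : ℝ → ℂ} (hu : Continuous u) :
    (lpnorm 6 u)^3 = Real.sqrt (∫ x in Ioo (0:ℝ) 1, ‖u x‖^(6:ℕ)) := by
  have h := lpnorm_sq_int hu 6 (by norm_num)
  rw [show ENNReal.ofReal (6:ℝ) = 6 by norm_num] at h
  have hnn : 0 ≤ ∫ x in Ioo (0:ℝ) 1, ‖u x‖^(6:ℝ) :=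
    MeasureTheory.setIntegral_nonneg measurableSet_Ioo (fun x _ => by positivity)
  rw [h, ← Real.rpow_natCast ((∫ x in Ioo (0:ℝ) 1, ‖u x‖^(6:ℝ)) ^ (6⁻¹:ℝ)) 3,
      ← Real.rpow_mul hnn, Real.sqrt_eq_rpow]
  norm_num

lemma cubic_normsq (u : ℝ → ℂ) (x : ℝ) : ‖cubic u x‖^2 = ‖u x‖^(6:ℕ) := by
  rw [cubic, norm_mul, Complex.norm_real, Real.norm_eq_abs, _root_.abs_pow, _root_.sq_abs]
  ring

lemma lp_add {f g : ℝ → ℂ} (hf : Continuous f) (hg : Continuous g) :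
    lpnorm 2 (fun x => f x + g x) ≤ lpnorm 2 f + lpnorm 2 g := by
  have h : eLpNorm (fun x => f x + g x) 2 μ01 ≤ eLpNorm f 2 μ01 + eLpNorm g 2 μ01 :=
    eLpNorm_add_le (memLp_of_cont hf 2).aestronglyMeasurable
      (memLp_of_cont hg 2).aestronglyMeasurable (by norm_num : (1:ℝ≥0∞) ≤ 2)
  have hfe := (memLp_of_cont hf 2).eLpNorm_ne_top
  have hge := (memLp_of_cont hg 2).eLpNorm_ne_top
  rw [lpnorm, lpnorm, lpnorm, ← ENNReal.toReal_add hfe hge]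
  exact ENNReal.toReal_mono (ENNReal.add_ne_top.2 ⟨hfe, hge⟩) h


/-- Hölder-in-time estimate for the deterministic substep flow. -/
theorem stmt3 (l : ℝ) (hl : l = 1 ∨ l = -1) (N : ℕ) (hN : 1 ≤ N)
    (u : ℝ → ℂ) (hu : u ∈ HN N) (t : ℝ) (ht : 0 ≤ t) :
    lpnorm 2 (fun x => SN N t (fun y => u y + Complex.I * l * t * cubic u y) x - u x)
      ≤ Real.sqrt (2*t)
          * Real.sqrt (∑ k ∈ Finset.Icc 1 N,
              (k:ℝ)^2 * Real.pi^2 * ‖coeff k u‖^2)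
        + t * (lpnorm 6 u)^3 := by
  obtain ⟨c, hc⟩ := hu
  have hucont : Continuous u := by
    rw [hc]; exact continuous_finset_sum _ fun k _ => continuous_const.mul (contE k)
  have hcub : Continuous (cubic u) := by
    unfold cubic
    exact (Complex.continuous_ofReal.comp ((hucont.norm).pow 2)).mul hucont
  have hcoeffu : ∀ k ∈ Finset.Icc 1 N, coeff k u = c k := by
    intro k hk; rw [hc]; exact coeff_sum N c k hk
  set E : ℕ → ℂ := fun k => Complex.exp (-Complex.I * (((k:ℝ)^2 * Real.pi^2 * t : ℝ) : ℂ)) with hE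
  set A : ℕ → ℂ := fun k => (E k - 1) * coeff k u with hA
  set B : ℕ → ℂ := fun k => E k * (Complex.I * l * t) * coeff k (cubic u) with hB
  have hcw : ∀ k ∈ Finset.Icc 1 N, coeff k (fun y => u y + Complex.I * l * t * cubic u y)
      = coeff k u + Complex.I * l * t * coeff k (cubic u) := by
    intro k hk
    rw [coeff, coeff, coeff]
    have hpt : ∀ x : ℝ, ((fun y => u y + Complex.I*l*t*cubic u y) x) * eFun k x
        = u x * eFun k x + (Complex.I*(l:ℂ)*(t:ℂ)) * (cubic u x * eFun k x) := fun x => by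
      simp only []; ring
    simp only [hpt]
    rw [MeasureTheory.integral_add (integrableOn_of_cont (f := fun x => u x * eFun k x) (hucont.mul (contE k)))
      ((integrableOn_of_cont (f := fun x => cubic u x * eFun k x) (hcub.mul (contE k))).const_mul _),
      MeasureTheory.integral_const_mul]
  have hFeq : (fun x => SN N t (fun y => u y + Complex.I * l * t * cubic u y) x - u x)
      = fun x => (∑ k ∈ Finset.Icc 1 N, A k * eFun k x)
        + (∑ k ∈ Finset.Icc 1 N, B k * eFun k x) := by
    funext x
    have hux : u x = ∑ k ∈ Finset.Icc 1 N, coeff k u * eFun k x := by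
      conv_lhs => rw [hc]
      exact (Finset.sum_congr rfl fun k hk => by rw [hcoeffu k hk]).symm
    simp only [SN]
    rw [hux, ← Finset.sum_add_distrib, ← Finset.sum_sub_distrib]
    refine Finset.sum_congr rfl fun k hk => ?_
    rw [hcw k hk, hA, hB, hE]
    ring
  rw [hFeq]
  have hAc : Continuous (fun x => ∑ k ∈ Finset.Icc 1 N, A k * eFun k x) :=
    continuous_finset_sum _ fun k _ => continuous_const.mul (contE k)
  have hBc : Continuous (fun x => ∑ k ∈ Finset.Icc 1 N, B k * eFun k x) :=
    continuous_finset_sum _ fun k _ => continuous_const.mul (contE k)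
  refine le_trans (lp_add hAc hBc) (add_le_add ?_ ?_)
  · rw [lpnorm_two_eq hAc, parseval]
    have hle : ∑ k ∈ Finset.Icc 1 N, ‖A k‖^2
        ≤ 2*t*∑ k ∈ Finset.Icc 1 N, (k:ℝ)^2*Real.pi^2*(‖coeff k u‖)^2 := by
      rw [Finset.mul_sum]
      refine Finset.sum_le_sum fun k hk => ?_
      rw [hA]
      simp only [norm_mul, mul_pow]
      have h1 : ‖E k - 1‖^2 ≤ 2*((k:ℝ)^2*Real.pi^2*t) := by
        rw [hE]
        exact expBound _ (by positivity)
      have h2 := mul_le_mul_of_nonneg_right h1 (sq_nonneg (‖coeff k u‖))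
      calc ‖E k - 1‖^2 * ‖coeff k u‖^2
          ≤ 2*((k:ℝ)^2*Real.pi^2*t) * ‖coeff k u‖^2 := h2
        _ = 2*t*((k:ℝ)^2*Real.pi^2*(‖coeff k u‖)^2) := by ring
    calc Real.sqrt (∑ k ∈ Finset.Icc 1 N, ‖A k‖^2)
        ≤ Real.sqrt (2*t*∑ k ∈ Finset.Icc 1 N,
            (k:ℝ)^2*Real.pi^2*(‖coeff k u‖)^2) := Real.sqrt_le_sqrt hle
      _ = _ := Real.sqrt_mul (by positivity) _
  · rw [lpnorm_two_eq hBc, parseval]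
    have habsB : ∀ k, ‖B k‖^2 = t^2 * ‖coeff k (cubic u)‖^2 := by
      intro k
      rw [hB]
      simp only [norm_mul]
      rw [hE]
      rw [abs_E ((k:ℝ)^2 * Real.pi^2 * t)]
      rw [Complex.norm_I, Complex.norm_real, Complex.norm_real, Real.norm_eq_abs, Real.norm_eq_abs]
      rcases hl with h | h <;> rw [h] <;>
        simp only [_root_.abs_of_nonneg ht, _root_.abs_one, _root_.abs_neg] <;> ring
    rw [Finset.sum_congr rfl (fun k _ => habsB k), ← Finset.mul_sum]
    have hb := bessel N hcub
    have hcu : ∫ x in Ioo (0:ℝ) 1, ‖cubic u x‖^2 = ∫ x in Ioo (0:ℝ) 1, ‖u x‖^(6:ℕ) :=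
      MeasureTheory.setIntegral_congr_fun measurableSet_Ioo (fun x _ => cubic_normsq u x)
    calc Real.sqrt (t^2 * ∑ k ∈ Finset.Icc 1 N, ‖coeff k (cubic u)‖^2)
        ≤ Real.sqrt (t^2 * ∫ x in Ioo (0:ℝ) 1, ‖u x‖^(6:ℕ)) := by
          refine Real.sqrt_le_sqrt (mul_le_mul_of_nonneg_left ?_ (sq_nonneg t))
          rw [← hcu]; exact hb
      _ = t * Real.sqrt (∫ x in Ioo (0:ℝ) 1, ‖u x‖^(6:ℕ)) := by
          rw [Real.sqrt_mul (sq_nonneg t), Real.sqrt_sq ht]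
      _ = t * (lpnorm 6 u)^3 := by rw [lpnorm_six_cubed hucont]
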